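/- A compact convex subset Ω of a finite-dimensional real vector space is a simplex if and only if every point of Ω has a unique representation as a convex combination of affinely independent extreme points of Ω. Equivalently: if Ω is not a simplex, then there exists a point of Ω with two distinct representations as convex combinations of extreme points. -/

import Mathlib

open Finset

section Aux

variable {V : Type*} [NormedAddCommGroup V] [NormedSpace ℝ V]

/-- Uniqueness of barycentric coordinates w.r.t. an affinely independent finset. -/
private lemma aux_unique {s : Finset V} (hs : AffineIndependent ℝ ((↑) : s → V))
    (w₁ w₂ : V →₀ ℝ) (h₁ : ↑w₁.support ⊆ (s : Set V)) (h₂ : ↑w₂.support ⊆ (s : Set V))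
    (hs₁ : ∑ v ∈ w₁.support, w₁ v = 1) (hs₂ : ∑ v ∈ w₂.support, w₂ v = 1)
    (hc : (∑ v ∈ w₁.support, w₁ v • v) = ∑ v ∈ w₂.support, w₂ v • v) : w₁ = w₂ := by
  classical
  have hsub₁ : w₁.support ⊆ s := fun v hv => by exact_mod_cast h₁ hv
  have hsub₂ : w₂.support ⊆ s := fun v hv => by exact_mod_cast h₂ hv
  have e₁ : ∑ v ∈ s, w₁ v = 1 := by
    rw [← Finset.sum_subset hsub₁ (fun x _ hx => Finsupp.notMem_support_iff.mp hx), hs₁]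
  have e₂ : ∑ v ∈ s, w₂ v = 1 := by
    rw [← Finset.sum_subset hsub₂ (fun x _ hx => Finsupp.notMem_support_iff.mp hx), hs₂]
  have c₁ : ∑ v ∈ s, w₁ v • v = ∑ v ∈ w₁.support, w₁ v • v := by
    refine (Finset.sum_subset hsub₁ (fun x _ hx => ?_)).symm
    rw [Finsupp.notMem_support_iff.mp hx, zero_smul]
  have c₂ : ∑ v ∈ s, w₂ v • v = ∑ v ∈ w₂.support, w₂ v • v := by
    refine (Finset.sum_subset hsub₂ (fun x _ hx => ?_)).symm
    rw [Finsupp.notMem_support_iff.mp hx, zero_smul]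
  have key := affineIndependent_iff.mp hs Finset.univ
    (fun i : s => w₁ i - w₂ i) ?_ ?_
  · ext v
    by_cases hv : v ∈ s
    · have := key ⟨v, hv⟩ (Finset.mem_univ _)
      simpa [sub_eq_zero] using this
    · have hv₁ : w₁ v = 0 := Finsupp.notMem_support_iff.mp (fun h => hv (hsub₁ h))
      have hv₂ : w₂ v = 0 := Finsupp.notMem_support_iff.mp (fun h => hv (hsub₂ h))
      rw [hv₁, hv₂]
  · rw [Finset.sum_coe_sort s (fun v => w₁ v - w₂ v), Finset.sum_sub_distrib, e₁, e₂, sub_self]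
  · rw [Finset.sum_coe_sort s (fun v => (w₁ v - w₂ v) • v)]
    simp only [sub_smul, Finset.sum_sub_distrib]
    rw [c₁, c₂, hc, sub_self]

/-- Carathéodory-style existence of an affinely independent convex decomposition. -/
private lemma aux_exists {A : Set V} {x : V} (hx : x ∈ convexHull ℝ A) :
    ∃ w : V →₀ ℝ, (∀ v, 0 ≤ w v) ∧ (↑w.support ⊆ A) ∧
      AffineIndependent ℝ (fun v : {v // v ∈ w.support} => (v : V)) ∧
      (∑ v ∈ w.support, w v) = 1 ∧ (∑ v ∈ w.support, w v • v) = x := by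
  classical
  rw [convexHull_eq_union] at hx
  simp only [Set.mem_iUnion, exists_prop] at hx
  obtain ⟨t, htA, htind, hxt⟩ := hx
  rw [Finset.mem_convexHull'] at hxt
  obtain ⟨w, hw0, hw1, hwx⟩ := hxt
  set W : V →₀ ℝ := Finsupp.onFinset t (fun v => if v ∈ t then w v else 0)
    (by intro v hv; by_contra h; simp [h] at hv) with hW
  have hWval : ∀ v ∈ t, W v = w v := fun v hv => by simp [hW, hv]
  have hWsupt : W.support ⊆ t := by
    intro v hv
    by_contra h
    exact (Finsupp.mem_support_iff.mp hv) (by simp [hW, h])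
  refine ⟨W, ?_, ?_, ?_, ?_, ?_⟩
  · intro v
    by_cases hv : v ∈ t
    · rw [hWval v hv]; exact hw0 v hv
    · simp [hW, hv]
  · exact fun v hv => htA (hWsupt hv)
  · exact htind.comp_embedding
      ⟨fun v => ⟨v.1, hWsupt v.2⟩, fun a b hab => Subtype.ext (by simpa using congrArg Subtype.val hab)⟩
  · rw [Finset.sum_subset hWsupt (fun v _ hv => Finsupp.notMem_support_iff.mp hv)]
    rw [Finset.sum_congr rfl (fun v hv => hWval v hv), hw1]
  · rw [Finset.sum_subset hWsupt (fun v _ hv => by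
      rw [Finsupp.notMem_support_iff.mp hv, zero_smul])]
    rw [Finset.sum_congr rfl (fun v hv => by rw [hWval v hv]), hwx]

/-- Each point of an affinely independent finset is an extreme point of its convex hull. -/
private lemma aux_vertex {s : Finset V} (hs : AffineIndependent ℝ ((↑) : s → V))
    {a : V} (ha : a ∈ s) : a ∈ Set.extremePoints ℝ (convexHull ℝ (s : Set V)) := by
  classical
  rw [mem_extremePoints]
  refine ⟨subset_convexHull ℝ _ ha, ?_⟩
  rintro x₁ hx₁ x₂ hx₂ ⟨c₁, c₂, hc₁, hc₂, hcsum, hca⟩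
  rw [Finset.mem_convexHull'] at hx₁ hx₂
  obtain ⟨u, hu0, hu1, hux⟩ := hx₁
  obtain ⟨v, hv0, hv1, hvx⟩ := hx₂
  have key := affineIndependent_iff.mp hs Finset.univ
    (fun i : s => c₁ * u i + c₂ * v i - (if (i : V) = a then 1 else 0)) ?_ ?_
  · have hz : ∀ b ∈ s, b ≠ a → u b = 0 ∧ v b = 0 := by
      intro b hb hba
      have := key ⟨b, hb⟩ (Finset.mem_univ _)
      simp only [hba, if_false, sub_zero] at this
      have h1 : 0 ≤ c₁ * u b := mul_nonneg hc₁.le (hu0 b hb)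
      have h2 : 0 ≤ c₂ * v b := mul_nonneg hc₂.le (hv0 b hb)
      constructor
      · have : c₁ * u b = 0 := by linarith
        exact (mul_eq_zero.mp this).resolve_left (ne_of_gt hc₁)
      · have : c₂ * v b = 0 := by linarith
        exact (mul_eq_zero.mp this).resolve_left (ne_of_gt hc₂)
    have hua : u a = 1 := by
      rw [← hu1, Finset.sum_eq_single a (fun b hb hba => (hz b hb hba).1) (fun h => absurd ha h)]
    have hva : v a = 1 := by
      rw [← hv1, Finset.sum_eq_single a (fun b hb hba => (hz b hb hba).2) (fun h => absurd ha h)]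
    constructor
    · rw [← hux, Finset.sum_eq_single a
        (fun b hb hba => by rw [(hz b hb hba).1, zero_smul]) (fun h => absurd ha h),
        hua, one_smul]
    · rw [← hvx, Finset.sum_eq_single a
        (fun b hb hba => by rw [(hz b hb hba).2, zero_smul]) (fun h => absurd ha h),
        hva, one_smul]
  · rw [Finset.sum_coe_sort s (fun b => c₁ * u b + c₂ * v b - (if b = a then 1 else 0))]
    rw [Finset.sum_sub_distrib, Finset.sum_add_distrib, ← Finset.mul_sum, ← Finset.mul_sum,
      hu1, hv1, Finset.sum_ite_eq' s a (fun _ => (1 : ℝ)), if_pos ha]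
    linarith
  · rw [Finset.sum_coe_sort s (fun b => (c₁ * u b + c₂ * v b - (if b = a then 1 else 0)) • b)]
    simp only [sub_smul, add_smul, mul_smul, Finset.sum_sub_distrib, Finset.sum_add_distrib,
      ← Finset.smul_sum]
    rw [hux, hvx]
    have : ∑ b ∈ s, (if b = a then (1 : ℝ) else 0) • b = a := by
      rw [Finset.sum_eq_single a (fun b _ hba => by rw [if_neg hba, zero_smul])
        (fun h => absurd ha h), if_pos rfl, one_smul]
    rw [this, hca, sub_self]

/-- If the extreme points are affinely dependent, some point has two distinct
affinely independent convex decompositions into extreme points. -/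
private lemma aux_radon {Ω : Set V} (hconv : Convex ℝ Ω)
    (h : ¬ AffineIndependent ℝ ((↑) : Set.extremePoints ℝ Ω → V)) :
    ∃ x ∈ Ω, ∃ w₁ w₂ : V →₀ ℝ, w₁ ≠ w₂ ∧
      ((∀ v, 0 ≤ w₁ v) ∧ (↑w₁.support ⊆ Set.extremePoints ℝ Ω) ∧
        AffineIndependent ℝ (fun v : {v // v ∈ w₁.support} => (v : V)) ∧
        (∑ v ∈ w₁.support, w₁ v) = 1 ∧ (∑ v ∈ w₁.support, w₁ v • v) = x) ∧
      ((∀ v, 0 ≤ w₂ v) ∧ (↑w₂.support ⊆ Set.extremePoints ℝ Ω) ∧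
        AffineIndependent ℝ (fun v : {v // v ∈ w₂.support} => (v : V)) ∧
        (∑ v ∈ w₂.support, w₂ v) = 1 ∧ (∑ v ∈ w₂.support, w₂ v • v) = x) := by
  classical
  obtain ⟨I, p, hpI, hpIc⟩ := Convex.radon_partition h
  have hIsub : (((↑) : Set.extremePoints ℝ Ω → V) '' I) ⊆ Set.extremePoints ℝ Ω := by
    rintro _ ⟨i, _, rfl⟩; exact i.2
  have hIcsub : (((↑) : Set.extremePoints ℝ Ω → V) '' Iᶜ) ⊆ Set.extremePoints ℝ Ω := by
    rintro _ ⟨i, _, rfl⟩; exact i.2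
  have hpΩ : p ∈ Ω :=
    convexHull_min (hIsub.trans extremePoints_subset) hconv hpI
  obtain ⟨w₁, hw₁0, hw₁s, hw₁i, hw₁1, hw₁x⟩ := aux_exists hpI
  obtain ⟨w₂, hw₂0, hw₂s, hw₂i, hw₂1, hw₂x⟩ := aux_exists hpIc
  have hdisj : (((↑) : Set.extremePoints ℝ Ω → V) '' I) ∩
      (((↑) : Set.extremePoints ℝ Ω → V) '' Iᶜ) = ∅ := by
    rw [← Set.image_inter Subtype.coe_injective, Set.inter_compl_self, Set.image_empty]
  have hne : w₁ ≠ w₂ := by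
    intro heq
    have hsupne : w₁.support.Nonempty := by
      rcases Finset.eq_empty_or_nonempty w₁.support with h | h
      · rw [h] at hw₁1; simp at hw₁1
      · exact h
    obtain ⟨v, hv⟩ := hsupne
    have hv₁ : v ∈ (((↑) : Set.extremePoints ℝ Ω → V) '' I) := hw₁s hv
    have hv₂ : v ∈ (((↑) : Set.extremePoints ℝ Ω → V) '' Iᶜ) := hw₂s (heq ▸ hv)
    exact absurd (Set.mem_inter hv₁ hv₂) (by rw [hdisj]; exact Set.notMem_empty v)
  exact ⟨p, hpΩ, w₁, w₂, hne,
    ⟨hw₁0, hw₁s.trans hIsub, hw₁i, hw₁1, hw₁x⟩,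
    ⟨hw₂0, hw₂s.trans hIcsub, hw₂i, hw₂1, hw₂x⟩⟩

end Aux

/-- A compact convex set `Ω` in a finite-dimensional real vector space is a
simplex iff every point has a unique representation as a convex combination of affinely
independent extreme points; equivalently, if `Ω` is not a simplex then some point has two
distinct representations as convex combinations of extreme points. -/
theorem simplex_iff_unique_decomposition
    {V : Type*} [NormedAddCommGroup V] [NormedSpace ℝ V] [FiniteDimensional ℝ V]
    (Ω : Set V) (hcomp : IsCompact Ω) (hconv : Convex ℝ Ω) :
    ((∃ s : Finset V, AffineIndependent ℝ ((↑) : s → V) ∧ Ω = convexHull ℝ (s : Set V)) ↔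
      (∀ x ∈ Ω, ∃! w : V →₀ ℝ,
        (∀ v, 0 ≤ w v) ∧ (↑w.support ⊆ Set.extremePoints ℝ Ω) ∧
        AffineIndependent ℝ (fun v : {v // v ∈ w.support} => (v : V)) ∧
        (∑ v ∈ w.support, w v) = 1 ∧ (∑ v ∈ w.support, w v • v) = x)) ∧
    ((¬∃ s : Finset V, AffineIndependent ℝ ((↑) : s → V) ∧ Ω = convexHull ℝ (s : Set V)) →
      ∃ x ∈ Ω, ∃ w₁ w₂ : V →₀ ℝ, w₁ ≠ w₂ ∧
        (∀ v, 0 ≤ w₁ v) ∧ (↑w₁.support ⊆ Set.extremePoints ℝ Ω) ∧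
        (∑ v ∈ w₁.support, w₁ v) = 1 ∧ (∑ v ∈ w₁.support, w₁ v • v) = x ∧
        (∀ v, 0 ≤ w₂ v) ∧ (↑w₂.support ⊆ Set.extremePoints ℝ Ω) ∧
        (∑ v ∈ w₂.support, w₂ v) = 1 ∧ (∑ v ∈ w₂.support, w₂ v • v) = x) := by
  classical
  have transfer : ∀ (h : (Set.extremePoints ℝ Ω).Finite),
      AffineIndependent ℝ ((↑) : Set.extremePoints ℝ Ω → V) →
      AffineIndependent ℝ ((↑) : h.toFinset → V) := by
    intro h hind
    rw [← h.coe_toFinset] at hind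
    exact hind
  constructor
  · constructor
    · -- simplex → unique decomposition
      rintro ⟨s, hs, rfl⟩ x hx
      have hse : (s : Set V) ⊆ Set.extremePoints ℝ (convexHull ℝ (s : Set V)) :=
        fun a ha => aux_vertex hs ha
      have hes : Set.extremePoints ℝ (convexHull ℝ (s : Set V)) ⊆ (s : Set V) :=
        extremePoints_convexHull_subset
      obtain ⟨w, hw0, hwsup, hwi, hw1, hwx⟩ := aux_exists hx
      refine ⟨w, ⟨hw0, hwsup.trans hse, hwi, hw1, hwx⟩, ?_⟩
      rintro w' ⟨hw'0, hw'sup, _, hw'1, hw'x⟩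
      exact aux_unique hs w' w (hw'sup.trans hes) hwsup hw'1 hw1 (hw'x.trans hwx.symm)
    · -- unique decomposition → simplex
      intro H
      have hEind : AffineIndependent ℝ ((↑) : Set.extremePoints ℝ Ω → V) := by
        by_contra h
        obtain ⟨x, hxΩ, w₁, w₂, hne, h₁, h₂⟩ := aux_radon hconv h
        obtain ⟨w, _, huniq⟩ := H x hxΩ
        exact hne ((huniq w₁ h₁).trans (huniq w₂ h₂).symm)
      have hEfin : (Set.extremePoints ℝ Ω).Finite :=
        finite_set_of_fin_dim_affineIndependent ℝ hEind
      refine ⟨hEfin.toFinset, transfer hEfin hEind, ?_⟩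
      rw [hEfin.coe_toFinset]
      apply Set.Subset.antisymm
      · intro x hx
        obtain ⟨w, ⟨hw0, hwsup, _, hw1, hwx⟩, _⟩ := H x hx
        have hcm := Finset.centerMass_mem_convexHull w.support
          (fun v _ => hw0 v) (by rw [hw1]; norm_num)
          (fun v hv => hwsup hv) (z := id)
        rwa [Finset.centerMass_eq_of_sum_1 _ _ hw1, show (∑ v ∈ w.support, w v • id v) = x from
          hwx] at hcm
      · exact convexHull_min extremePoints_subset hconv
  · -- not a simplex → a point with two decompositions
    intro hns
    by_cases hEind : AffineIndependent ℝ ((↑) : Set.extremePoints ℝ Ω → V)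
    · exfalso
      apply hns
      have hEfin : (Set.extremePoints ℝ Ω).Finite :=
        finite_set_of_fin_dim_affineIndependent ℝ hEind
      refine ⟨hEfin.toFinset, transfer hEfin hEind, ?_⟩
      have hcl : IsClosed (convexHull ℝ (Set.extremePoints ℝ Ω)) :=
        (hEfin.isCompact_convexHull ℝ).isClosed
      have hKM := closure_convexHull_extremePoints hcomp hconv
      rw [hEfin.coe_toFinset]
      exact (hcl.closure_eq.symm.trans hKM).symm
    · obtain ⟨x, hxΩ, w₁, w₂, hne, h₁, h₂⟩ := aux_radon hconv hEind
      exact ⟨x, hxΩ, w₁, w₂, hne, h₁.1, h₁.2.1, h₁.2.2.2.1, h₁.2.2.2.2,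
        h₂.1, h₂.2.1, h₂.2.2.2.1, h₂.2.2.2.2⟩
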